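/- arXiv:1708.09028 — 2 statements merged into one kernel-verified Lean document; each statement's English description precedes it below -/
import Mathlib

section
/- Let Φ: [0,∞) → [0,1] be an n-monotone Archimedean generator that is (n-1)-times differentiable, and let F̄_R(x) = Σ_{j=0}^{n-1} (-1)^j (x^j/j!) Φ^{(j)}(x). Then for all x ≥ 0 and all a ∈ (0,1), Φ(ax)/(1-a)^{n-1} ≥ F̄_R(x). -/
open Set Finset

lemma myIterWithin {f : ℝ → ℝ} {N k : ℕ} (hf : ContDiff ℝ (N:ℕ∞) f) (hk : k ≤ N)
    {s : Set ℝ} (hs : UniqueDiffOn ℝ s) {x : ℝ} (hx : x ∈ s) :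
    iteratedDerivWithin k f s x = iteratedDeriv k f x := by
  have h := (contDiff_iff_ftaylorSeries.mp hf).hasFTaylorSeriesUpToOn s
  have h2 := h.eq_iteratedFDerivWithin_of_uniqueDiffOn (by exact_mod_cast hk) hs hx
  rw [iteratedDerivWithin_eq_iteratedFDerivWithin, iteratedDeriv_eq_iteratedFDeriv, ← h2]
  rfl

/-- for an `n`-monotone, `(n-1)`-times differentiable Archimedean generator `Φ`,
the survival function `F̄_R(x) = ∑_{j=0}^{n-1} (-1)^j x^j/j! Φ^{(j)}(x)` satisfies
`Φ(ax)/(1-a)^{n-1} ≥ F̄_R(x)` for all `x ≥ 0` and `a ∈ (0,1)`. -/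
theorem stmt0 (n : ℕ) (hn : 2 ≤ n) (Φ : ℝ → ℝ)
    (hmap : ∀ x ≥ (0:ℝ), Φ x ∈ Set.Icc (0:ℝ) 1)
    (hdiff : ContDiff ℝ (n - 1) Φ)
    (hmono : ∀ i ≤ n - 2, ∀ x ≥ (0:ℝ), 0 ≤ (-1:ℝ)^i * iteratedDeriv i Φ x)
    (hanti : AntitoneOn (fun x => (-1:ℝ)^(n-2) * iteratedDeriv (n-2) Φ x) (Set.Ici 0))
    (hconv : ConvexOn ℝ (Set.Ici 0) (fun x => (-1:ℝ)^(n-2) * iteratedDeriv (n-2) Φ x)) :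
    ∀ x ≥ (0:ℝ), ∀ a ∈ Set.Ioo (0:ℝ) 1,
      (∑ j ∈ Finset.range n, (-1:ℝ)^j * x^j / (j.factorial : ℝ) * iteratedDeriv j Φ x)
        ≤ Φ (a * x) / (1 - a)^(n-1) := by
  obtain ⟨m, rfl⟩ : ∃ m, n = m + 2 := ⟨n - 2, by omega⟩
  have e1 : m + 2 - 1 = m + 1 := by omega
  have e2 : m + 2 - 2 = m := by omega
  replace hdiff : ContDiff ℝ (((m+1:ℕ)):ℕ∞) Φ := by
    refine hdiff.of_le ?_
    norm_cast
  rw [e2] at hmono hconv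
  intro x hx a ha
  obtain ⟨ha0, ha1⟩ := ha
  have h1a : 0 < 1 - a := by linarith
  rw [e1, le_div_iff₀ (by positivity)]
  rcases eq_or_lt_of_le hx with rfl | hx0
  · -- x = 0 case
    have hsum : (∑ j ∈ Finset.range (m+2),
        (-1:ℝ)^j * (0:ℝ)^j / (j.factorial : ℝ) * iteratedDeriv j Φ 0) = Φ 0 := by
      rw [Finset.sum_eq_single 0]
      · simp
      · intro b _ hb
        simp [zero_pow hb]
      · simp
    rw [hsum, mul_zero]
    have hΦ0 := hmap 0 le_rfl
    have hp1 : (1-a)^(m+1) ≤ 1 := pow_le_one₀ h1a.le (by linarith)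
    nlinarith [hΦ0.1, hΦ0.2]
  · -- x > 0 case
    set s : ℝ := x + a * x with hs
    set g : ℝ → ℝ := fun y => Φ (s - y) with hgdef
    have hg_id : ∀ k y, iteratedDeriv k g y = (-1:ℝ)^k * iteratedDeriv k Φ (s - y) := by
      intro k y
      have h1 : iteratedDeriv k g y = (-1:ℝ)^k • iteratedDeriv k (fun z => Φ (s+z)) (-y) := by
        rw [show g = (fun x => (fun z => Φ (s+z)) (-x)) from funext fun t => by
          simp [hgdef, sub_eq_add_neg]]
        exact iteratedDeriv_comp_neg k (fun z => Φ (s+z)) y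
      rw [iteratedDeriv_comp_const_add] at h1
      rw [h1]
      simp [smul_eq_mul, sub_eq_add_neg]
    have hgC : ContDiff ℝ ((m+1 : ℕ) : ℕ∞) g :=
      hdiff.comp (contDiff_const.sub contDiff_id)
    have hax : a * x < x := by nlinarith
    have uD : UniqueDiffOn ℝ (Icc (a*x) x) := uniqueDiffOn_Icc hax
    have hsub0 : Icc (a*x) x ⊆ Ici 0 := fun y hy => le_trans (by positivity) hy.1
    -- Taylor's theorem with Lagrange remainder
    have hIcc : uIcc (a*x) x = Icc (a*x) x := Set.uIcc_of_le hax.le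
    have hIoo : uIoo (a*x) x = Ioo (a*x) x := Set.uIoo_of_le hax.le
    obtain ⟨η, hη, htay⟩ := taylor_mean_remainder_lagrange (n := m) hax.ne
      ((hgC.of_le (by exact_mod_cast Nat.le_succ m)).contDiffOn)
      (by
        rw [hIcc, hIoo]
        intro y hy
        have hdm : Differentiable ℝ (iteratedDeriv m g) :=
          hgC.differentiable_iteratedDeriv m (by exact_mod_cast Nat.lt_succ_self m)
        refine ((hdm y).differentiableWithinAt).congr (fun z hz => ?_) ?_
        · exact myIterWithin hgC (Nat.le_succ m) uD (Ioo_subset_Icc_self hz)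
        · exact myIterWithin hgC (Nat.le_succ m) uD (Ioo_subset_Icc_self hy))
    rw [hIoo] at hη
    rw [hIcc] at htay
    -- rewrite the Taylor formula
    have hgx : g x = Φ (a * x) := by
      show Φ (s - x) = Φ (a * x)
      rw [hs]; ring_nf
    set ξ : ℝ := s - η with hξ
    have hηmem := hη
    have hξ1 : a * x < ξ := by simp only [hξ, hs]; linarith [hηmem.2]
    have hξ2 : ξ < x := by simp only [hξ, hs]; linarith [hηmem.1]
    have htayval : taylorWithinEval g m (Icc (a*x) x) (a*x) x =
        ∑ k ∈ Finset.range (m+1),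
          ((1-a)*x)^k / (k.factorial : ℝ) * ((-1:ℝ)^k * iteratedDeriv k Φ x) := by
      rw [taylor_within_apply]
      refine Finset.sum_congr rfl fun k hk => ?_
      have hk' : k ≤ m + 1 := by
        have := Finset.mem_range.mp hk; omega
      rw [myIterWithin hgC hk' uD (left_mem_Icc.mpr hax.le), hg_id]
      have : s - a * x = x := by rw [hs]; ring
      rw [this]
      have : x - a * x = (1-a) * x := by ring
      rw [this, smul_eq_mul]
      ring
    have hrem : iteratedDerivWithin (m+1) g (Icc (a*x) x) η =
        (-1:ℝ)^(m+1) * iteratedDeriv (m+1) Φ ξ := by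
      rw [myIterWithin hgC le_rfl uD (Ioo_subset_Icc_self hη), hg_id]
    rw [hgx, htayval, hrem, sub_eq_iff_eq_add] at htay
    -- monotonicity of the (m+1)-st derivative
    have hdiffm : Differentiable ℝ (iteratedDeriv m Φ) :=
      hdiff.differentiable_iteratedDeriv m (by exact_mod_cast Nat.lt_succ_self m)
    have hmder : MonotoneOn (fun t => (-1:ℝ)^m * iteratedDeriv (m+1) Φ t) (Ici 0) := by
      have h1 := hconv.monotoneOn_deriv (fun t _ => ((hdiffm t).const_mul ((-1:ℝ)^m)))
      have h2 : ∀ t, deriv (fun y => (-1:ℝ)^m * iteratedDeriv m Φ y) t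
          = (-1:ℝ)^m * iteratedDeriv (m+1) Φ t := by
        intro t
        rw [deriv_const_mul _ (hdiffm t), ← iteratedDeriv_succ]
      exact fun u hu v hv huv => by
        have := h1 hu hv huv
        rwa [h2, h2] at this
    have hξ0 : (0:ℝ) ≤ ξ := le_trans (by positivity) hξ1.le
    have hkey : (-1:ℝ)^(m+1) * iteratedDeriv (m+1) Φ x ≤ (-1:ℝ)^(m+1) * iteratedDeriv (m+1) Φ ξ := by
      have := hmder (mem_Ici.mpr hξ0) (mem_Ici.mpr (le_trans hξ0 hξ2.le)) hξ2.le
      have hpow : (-1:ℝ)^(m+1) = -((-1:ℝ)^m) := by rw [pow_succ]; ring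
      rw [hpow]; simp only [neg_mul, neg_le_neg_iff]; exact this
    -- final comparison
    have hx1a : x - a * x = (1-a) * x := by ring
    have hsumle : (∑ j ∈ Finset.range (m+1),
          (-1:ℝ)^j * x^j / (j.factorial:ℝ) * iteratedDeriv j Φ x) * (1-a)^(m+1)
        ≤ ∑ k ∈ Finset.range (m+1),
          ((1-a)*x)^k / (k.factorial:ℝ) * ((-1:ℝ)^k * iteratedDeriv k Φ x) := by
      rw [Finset.sum_mul]
      refine Finset.sum_le_sum fun j hj => ?_
      have hjm : j ≤ m := by have := Finset.mem_range.mp hj; omega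
      have hc : 0 ≤ (-1:ℝ)^j * x^j / (j.factorial:ℝ) * iteratedDeriv j Φ x := by
        have h0 := hmono j hjm x hx
        have he : (-1:ℝ)^j * x^j / (j.factorial:ℝ) * iteratedDeriv j Φ x
            = (x^j / (j.factorial:ℝ)) * ((-1:ℝ)^j * iteratedDeriv j Φ x) := by ring
        rw [he]
        exact mul_nonneg (by positivity) h0
      have hple : (1-a)^(m+1) ≤ (1-a)^j :=
        pow_le_pow_of_le_one h1a.le (by linarith) (by omega)
      calc (-1:ℝ)^j * x^j / (j.factorial:ℝ) * iteratedDeriv j Φ x * (1-a)^(m+1)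
          ≤ (-1:ℝ)^j * x^j / (j.factorial:ℝ) * iteratedDeriv j Φ x * (1-a)^j :=
            mul_le_mul_of_nonneg_left hple hc
        _ = ((1-a)^j * x^j) / (j.factorial:ℝ) * ((-1:ℝ)^j * iteratedDeriv j Φ x) := by ring
        _ = ((1-a)*x)^j / (j.factorial:ℝ) * ((-1:ℝ)^j * iteratedDeriv j Φ x) := by
            rw [mul_pow]
    have hlast : (-1:ℝ)^(m+1) * x^(m+1) / ((m+1).factorial:ℝ) * iteratedDeriv (m+1) Φ x * (1-a)^(m+1)
        ≤ (-1:ℝ)^(m+1) * iteratedDeriv (m+1) Φ ξ * (x - a*x)^(m+1) / ((m+1).factorial:ℝ) := by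
      rw [hx1a, mul_pow]
      have hnn : (0:ℝ) ≤ (1-a)^(m+1) * x^(m+1) / ((m+1).factorial:ℝ) := by positivity
      calc (-1:ℝ)^(m+1) * x^(m+1) / ((m+1).factorial:ℝ) * iteratedDeriv (m+1) Φ x * (1-a)^(m+1)
          = ((1-a)^(m+1) * x^(m+1) / ((m+1).factorial:ℝ))
              * ((-1:ℝ)^(m+1) * iteratedDeriv (m+1) Φ x) := by ring
        _ ≤ ((1-a)^(m+1) * x^(m+1) / ((m+1).factorial:ℝ))
              * ((-1:ℝ)^(m+1) * iteratedDeriv (m+1) Φ ξ) :=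
            mul_le_mul_of_nonneg_left hkey hnn
        _ = (-1:ℝ)^(m+1) * iteratedDeriv (m+1) Φ ξ * ((1-a)^(m+1) * x^(m+1)) / ((m+1).factorial:ℝ) := by
            ring
    rw [htay, Finset.sum_range_succ, add_mul]
    linarith
end

section
/- Let X_1,…,X_n be nonnegative random variables with X_i having regularly varying survival function F̄_i(x) = x^{-α_i} l_i(x), α_i > 0, and let z(s) = P(X_1 + ⋯ + X_n > s). Define Z(s) = P(M_n > s) + Σ_{i=1}^n (F̄_i(s/n) - F̄_i(s)) I_{A_i(s)}, where M_n = max_i X_i and A_i(s) are events with I_{A_i(s)} measurable indicators such that E[Z(s)] = z(s). Then limsup_{s→∞} Var(Z(s))/z(s)^2 ≤ Σ_{i=1}^n n^{2α_i}, so Z(s) has bounded relative error. -/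
open Set Finset Filter MeasureTheory ProbabilityTheory

/-- bounded relative error of the first conditional Monte Carlo estimator.
With regularly varying marginals `F̄_i(x) = x^{-α_i} l_i(x)` and unbiased estimator
`Z(s) = P(Mₙ > s) + ∑_i (F̄_i(s/n) - F̄_i(s)) 1_{A_i(s)}`,
`limsup_{s→∞} Var(Z(s))/z(s)² ≤ ∑_i n^{2α_i}`. -/
theorem stmt10 {Ω₀ : Type*} [MeasurableSpace Ω₀] (μ : Measure Ω₀) [IsProbabilityMeasure μ]
    (n : ℕ) (hn : 1 ≤ n) (X : Fin n → Ω₀ → ℝ) (hXmeas : ∀ i, Measurable (X i))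
    (hXpos : ∀ i ω, 0 ≤ X i ω)
    (α : Fin n → ℝ) (hα : ∀ i, 0 < α i) (l : Fin n → ℝ → ℝ)
    (hslow : ∀ i, ∀ t > (0:ℝ), Tendsto (fun x => l i (t * x) / l i x) atTop (nhds 1))
    (Fbar : Fin n → ℝ → ℝ)
    (hFbar : ∀ i x, Fbar i x = (μ {ω | x < X i ω}).toReal)
    (hreg : ∀ i, ∀ x > (0:ℝ), Fbar i x = x ^ (-(α i)) * l i x)
    (z : ℝ → ℝ) (hz : ∀ s, z s = (μ {ω | s < ∑ i, X i ω}).toReal)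
    (A : Fin n → ℝ → Set Ω₀) (hA : ∀ i s, MeasurableSet (A i s))
    (Z : ℝ → Ω₀ → ℝ)
    (hZ : ∀ s ω, Z s ω = (μ {ω' | ∀ i, X i ω' ≤ s}ᶜ).toReal
      + ∑ i, (Fbar i (s / n) - Fbar i s) * (A i s).indicator (fun _ => (1:ℝ)) ω)
    (hunbiased : ∀ s, ∫ ω, Z s ω ∂μ = z s) :
    Filter.limsup (fun s => variance (Z s) μ / (z s) ^ 2) atTop
        ≤ ∑ i, (n : ℝ) ^ (2 * α i) ∧
      Filter.IsBoundedUnder (· ≤ ·) atTop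
        (fun s => Real.sqrt (∫ ω, (Z s ω) ^ 2 ∂μ) / z s) := by
  have hn0 : (0:ℝ) < n := by exact_mod_cast hn
  set C : ℝ := ∑ i, (n : ℝ) ^ (2 * α i) with hCdef
  have hCnn : 0 ≤ C := Finset.sum_nonneg fun i _ => (Real.rpow_pos_of_pos hn0 _).le
  have hFnn : ∀ i x, 0 ≤ Fbar i x := fun i x => by rw [hFbar]; exact ENNReal.toReal_nonneg
  have hFz : ∀ i s, Fbar i s ≤ z s := by
    intro i s
    rw [hFbar, hz]
    refine ENNReal.toReal_mono (measure_ne_top μ _) (measure_mono fun ω h => ?_)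
    exact lt_of_lt_of_le h (Finset.single_le_sum (fun j _ => hXpos j ω) (Finset.mem_univ i))
  have hmono : ∀ i, ∀ s : ℝ, 0 < s → Fbar i s ≤ Fbar i (s / n) := by
    intro i s hs
    rw [hFbar, hFbar]
    refine ENNReal.toReal_mono (measure_ne_top μ _) (measure_mono fun ω h => ?_)
    exact lt_of_le_of_lt (div_le_self hs.le (by exact_mod_cast hn)) h
  -- Memℒp of Z s
  have hmem : ∀ s, MemLp (Z s) 2 μ := by
    intro s
    have : Z s = fun ω => (μ {ω' | ∀ i, X i ω' ≤ s}ᶜ).toReal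
        + ∑ i, (Fbar i (s / n) - Fbar i s) * (A i s).indicator (fun _ => (1:ℝ)) ω :=
      funext (hZ s)
    rw [this]
    refine MemLp.add (ε := ℝ) (f := fun _ : Ω₀ => (μ {ω' | ∀ i, X i ω' ≤ s}ᶜ).toReal)
      (g := fun ω => ∑ i, (Fbar i (s / n) - Fbar i s) * (A i s).indicator (fun _ => (1:ℝ)) ω)
      (memLp_const _) ?_
    refine memLp_finset_sum Finset.univ fun i _ => ?_
    exact (memLp_indicator_const 2 (hA i s) (1:ℝ) (Or.inr (measure_ne_top μ _))).const_mul _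
  -- eventual per-coordinate bound
  have hkey : ∀ i, ∀ᶠ s in atTop,
      0 < Fbar i s ∧ Fbar i (s / n) ≤ (1 + (n:ℝ) ^ (2 * α i)) * Fbar i s := by
    intro i
    have h1 : ∀ᶠ x in atTop, l i x ≠ 0 := by
      have h := hslow i 1 one_pos
      simp only [one_mul] at h
      filter_upwards [h.eventually_const_lt (show (1:ℝ)/2 < 1 by norm_num)] with x hx hx0
      rw [hx0, div_zero] at hx
      norm_num at hx
    have h2 : Tendsto (fun s => (n:ℝ) ^ (α i) * (l i (s / n) / l i s)) atTop
        (nhds ((n:ℝ) ^ (α i))) := by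
      have h := hslow i (1 / n) (by positivity)
      have h' := (tendsto_const_nhds (x := (n:ℝ) ^ (α i)) (f := atTop)).mul h
      rw [mul_one] at h'
      refine h'.congr fun s => ?_
      ring_nf
    have hlt : (n:ℝ) ^ (α i) < 1 + (n:ℝ) ^ (2 * α i) := by
      have h1 : (n:ℝ) ^ (α i) ≤ (n:ℝ) ^ (2 * α i) := by
        apply Real.rpow_le_rpow_of_exponent_le (by exact_mod_cast hn)
        nlinarith [hα i]
      linarith
    filter_upwards [h1, h2.eventually_lt_const hlt, eventually_gt_atTop (0:ℝ)]
      with s hl hr hs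
    have hsn : (0:ℝ) < s / n := by positivity
    have hFeq : Fbar i s = s ^ (-(α i)) * l i s := hreg i s hs
    have hspow : (0:ℝ) < s ^ (-(α i)) := Real.rpow_pos_of_pos hs _
    have hls : 0 < l i s := by
      rcases lt_trichotomy (l i s) 0 with h | h | h
      · exfalso; nlinarith [hFnn i s, hFeq.symm]
      · exact absurd h hl
      · exact h
    constructor
    · rw [hFeq]; positivity
    · rw [hreg i _ hsn, hFeq]
      have h4 : (s / n : ℝ) ^ (-(α i)) = (n:ℝ) ^ (α i) * s ^ (-(α i)) := by
        rw [Real.div_rpow hs.le hn0.le, Real.rpow_neg hn0.le, div_inv_eq_mul, mul_comm]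
      rw [h4]
      have h5 : (n:ℝ) ^ (α i) * l i (s / n) ≤ (1 + (n:ℝ) ^ (2 * α i)) * l i s := by
        have h := hr.le
        rw [mul_div_assoc'] at h
        exact (div_le_iff₀ hls).mp h
      nlinarith [hspow]
  have hall : ∀ᶠ s in atTop, ∀ i,
      0 < Fbar i s ∧ Fbar i (s / n) ≤ (1 + (n:ℝ) ^ (2 * α i)) * Fbar i s :=
    eventually_all.2 hkey
  -- main eventual bound
  have hev : ∀ᶠ s in atTop, 0 < z s ∧ variance (Z s) μ ≤ C * z s ^ 2 := by
    filter_upwards [hall, eventually_gt_atTop (0:ℝ)] with s hs hs0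
    have i0 : Fin n := ⟨0, hn⟩
    have hzpos : 0 < z s := lt_of_lt_of_le (hs i0).1 (hFz i0 s)
    refine ⟨hzpos, ?_⟩
    set m : ℝ := (μ {ω' | ∀ i, X i ω' ≤ s}ᶜ).toReal with hm
    set c : Fin n → ℝ := fun i => Fbar i (s / n) - Fbar i s with hc
    have hc0 : ∀ i, 0 ≤ c i := fun i => sub_nonneg.2 (hmono i s hs0)
    have hm0 : 0 ≤ m := ENNReal.toReal_nonneg
    have hZb : ∀ ω, m ≤ Z s ω ∧ Z s ω ≤ m + ∑ i, c i := by
      intro ω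
      rw [hZ s ω]
      constructor
      · have : 0 ≤ ∑ i, c i * (A i s).indicator (fun _ => (1:ℝ)) ω :=
          Finset.sum_nonneg fun i _ =>
            mul_nonneg (hc0 i) (Set.indicator_nonneg (fun _ _ => zero_le_one) ω)
        linarith
      · have : ∑ i, c i * (A i s).indicator (fun _ => (1:ℝ)) ω ≤ ∑ i, c i := by
          refine Finset.sum_le_sum fun i _ => ?_
          have : (A i s).indicator (fun _ => (1:ℝ)) ω ≤ 1 :=
            Set.indicator_le_self' (fun _ _ => zero_le_one) ω |>.trans_eq rfl
          calc c i * (A i s).indicator (fun _ => (1:ℝ)) ω ≤ c i * 1 :=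
                mul_le_mul_of_nonneg_left (Set.indicator_le' (fun _ _ => le_refl 1)
                  (fun _ _ => zero_le_one) ω) (hc0 i)
            _ = c i := mul_one _
        linarith
    have hint : Integrable (Z s) μ := (hmem s).integrable (by norm_num)
    have hintsq : Integrable (fun ω => Z s ω ^ 2) μ := by
      simpa [Pi.pow_apply] using (hmem s).integrable_sq
    have hzm : m ≤ z s := by
      rw [← hunbiased s]
      calc m = ∫ _ : Ω₀, m ∂μ := by simp
        _ ≤ ∫ ω, Z s ω ∂μ := integral_mono (integrable_const m) hint fun ω => (hZb ω).1
    have hsum_le : ∑ i, c i ≤ C * z s := by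
      rw [hCdef, Finset.sum_mul]
      refine Finset.sum_le_sum fun i _ => ?_
      have h1 : c i ≤ (n:ℝ) ^ (2 * α i) * Fbar i s := by
        have := (hs i).2
        simp only [hc]
        nlinarith
      calc c i ≤ (n:ℝ) ^ (2 * α i) * Fbar i s := h1
        _ ≤ (n:ℝ) ^ (2 * α i) * z s :=
          mul_le_mul_of_nonneg_left (hFz i s) (Real.rpow_pos_of_pos hn0 _).le
    have hEZ2 : ∫ ω, Z s ω ^ 2 ∂μ ≤ (m + ∑ i, c i) * z s := by
      calc ∫ ω, Z s ω ^ 2 ∂μ ≤ ∫ ω, (m + ∑ i, c i) * Z s ω ∂μ := by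
            refine integral_mono hintsq (hint.const_mul _) fun ω => ?_
            have h1 := (hZb ω).1; have h2 := (hZb ω).2
            nlinarith [hm0]
        _ = (m + ∑ i, c i) * z s := by rw [integral_const_mul, hunbiased]
    have hvar : variance (Z s) μ = (∫ ω, Z s ω ^ 2 ∂μ) - z s ^ 2 := by
      rw [variance_eq_sub (hmem s), hunbiased]
      congr 1
    have hcnn : 0 ≤ ∑ i, c i := Finset.sum_nonneg fun i _ => hc0 i
    rw [hvar]
    nlinarith [hzpos]
  constructor
  · refine limsup_le_of_le ?_ ?_
    · refine isCoboundedUnder_le_of_eventually_le atTop (x := 0) ?_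
      filter_upwards with s
      exact div_nonneg (variance_nonneg _ _) (sq_nonneg _)
    · filter_upwards [hev] with s hs
      rw [div_le_iff₀ (pow_pos hs.1 2)]
      exact hs.2
  · refine isBoundedUnder_of_eventually_le (a := Real.sqrt (C + 1)) ?_
    filter_upwards [hev] with s hs
    have hzpos := hs.1
    have hEZ2 : ∫ ω, Z s ω ^ 2 ∂μ ≤ (C + 1) * z s ^ 2 := by
      have hvar : variance (Z s) μ = (∫ ω, Z s ω ^ 2 ∂μ) - z s ^ 2 := by
        rw [variance_eq_sub (hmem s), hunbiased]
        congr 1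
      nlinarith [hs.2, hvar]
    rw [div_le_iff₀ hzpos]
    calc Real.sqrt (∫ ω, Z s ω ^ 2 ∂μ) ≤ Real.sqrt ((C + 1) * z s ^ 2) :=
          Real.sqrt_le_sqrt hEZ2
      _ = Real.sqrt (C + 1) * z s := by
          rw [Real.sqrt_mul (by linarith), Real.sqrt_sq hzpos.le]
end
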